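/- Let φ : T_OP(X, X') → T_OP(Y, Y') be a semigroup isomorphism. If α ∈ T_OP(X, X') has finite range, then φ(α) has finite range of the same cardinality: |ran(φ(α))| = |ran α|. -/
import Mathlib


open Set Function

/-- The semigroup of order-preserving self-maps of `X` with range contained in `X'`. -/
def OPR {X : Type*} [LinearOrder X] (X' : Set X) : Set (X → X) :=
  {f | Monotone f ∧ Set.range f ⊆ X'}

/-- `φ` is a semigroup isomorphism from `T_OP(X, X')` onto `T_OP(Y, Y')`
(composition written left-to-right: `f * g = g ∘ f`). -/
def IsSgIso {X Y : Type*} [LinearOrder X] [LinearOrder Y] (X' : Set X) (Y' : Set Y)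
    (φ : (X → X) → (Y → Y)) : Prop :=
  Set.BijOn φ (OPR X') (OPR Y') ∧
    ∀ f ∈ OPR X', ∀ g ∈ OPR X', φ (g ∘ f) = φ g ∘ φ f

lemma const_mem_OPR {X : Type*} [LinearOrder X] {X' : Set X} {a : X} (ha : a ∈ X') :
    (fun _ : X => a) ∈ OPR X' := by
  refine ⟨monotone_const, ?_⟩
  rintro x ⟨y, rfl⟩; exact ha

lemma comp_mem_OPR {X : Type*} [LinearOrder X] {X' : Set X} {f g : X → X}
    (hf : f ∈ OPR X') (hg : g ∈ OPR X') : g ∘ f ∈ OPR X' := by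
  refine ⟨hg.1.comp hf.1, ?_⟩
  rintro x ⟨y, rfl⟩; exact hg.2 ⟨f y, rfl⟩

/-- Key half: an isomorphism cannot increase the (finite) range cardinality. -/
theorem sg_iso_range_le {X Y : Type*} [LinearOrder X] [LinearOrder Y] {X' : Set X} {Y' : Set Y}
    (hX' : X'.Nontrivial) (hY' : Y'.Nontrivial)
    {φ : (X → X) → (Y → Y)} (hφ : IsSgIso X' Y' φ) :
    ∀ α ∈ OPR X', (Set.range α).Finite →
      (Set.range (φ α)).Finite ∧ (Set.range (φ α)).ncard ≤ (Set.range α).ncard := by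
  classical
  obtain ⟨a₀, ha₀, _, _, _⟩ := hX'
  obtain ⟨b₀, hb₀, _, _, _⟩ := hY'
  -- constants are sent to constants (right zeros to right zeros)
  set θ : X → Y := fun a => φ (fun _ : X => a) b₀ with hθdef
  have hconst : ∀ a ∈ X', φ (fun _ : X => a) = fun _ : Y => θ a := by
    intro a ha
    have hc : (fun _ : X => a) ∈ OPR X' := const_mem_OPR ha
    have h1 : φ ((fun _ : X => a) ∘ (fun _ : X => a₀)) = φ (fun _ : X => a) ∘ φ (fun _ : X => a₀) :=
      hφ.2 _ (const_mem_OPR ha₀) _ hc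
    have h2 : ((fun _ : X => a) ∘ (fun _ : X => a₀)) = (fun _ : X => a) := rfl
    -- show that φ c absorbs any element of the image semigroup on the right
    have habs : ∀ g ∈ OPR Y', φ (fun _ : X => a) ∘ g = φ (fun _ : X => a) := by
      intro g hg
      obtain ⟨f, hf, rfl⟩ := hφ.1.surjOn hg
      rw [← hφ.2 f hf _ hc]
      congr 1
    have := habs (fun _ : Y => b₀) (const_mem_OPR hb₀)
    funext y
    calc φ (fun _ : X => a) y = (φ (fun _ : X => a) ∘ (fun _ : Y => b₀)) y := by
          rw [this]
      _ = θ a := rfl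
  have hθmem : ∀ a ∈ X', θ a ∈ Y' := by
    intro a ha
    exact (hφ.1.mapsTo (const_mem_OPR ha)).2 ⟨b₀, rfl⟩
  have hθinj : Set.InjOn θ X' := by
    intro a ha a' ha' h
    have : φ (fun _ : X => a) = φ (fun _ : X => a') := by
      rw [hconst a ha, hconst a' ha', h]
    have := hφ.1.injOn (const_mem_OPR ha) (const_mem_OPR ha') this
    exact congrFun this a₀
  have hθsurj : Set.SurjOn θ X' Y' := by
    intro b hb
    obtain ⟨z, hz, hzb⟩ := hφ.1.surjOn (const_mem_OPR hb)
    -- z is a right zero, hence a constant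
    have hzc : z ∘ (fun _ : X => a₀) = z := by
      apply hφ.1.injOn (comp_mem_OPR (const_mem_OPR ha₀) hz) hz
      rw [hφ.2 _ (const_mem_OPR ha₀) _ hz, hzb]
      rfl
    have hzconst : z = fun _ : X => z a₀ := by
      funext x
      exact (congrFun hzc x).symm
    refine ⟨z a₀, hz.2 ⟨a₀, rfl⟩, ?_⟩
    show φ (fun _ : X => z a₀) b₀ = b
    rw [← hzconst, hzb]
  -- θ intertwines the action on fixed points
  have hθeq : ∀ a ∈ X', ∀ ε ∈ OPR X', θ (ε a) = φ ε (θ a) := by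
    intro a ha ε hε
    have h1 : φ (ε ∘ (fun _ : X => a)) = φ ε ∘ φ (fun _ : X => a) :=
      hφ.2 _ (const_mem_OPR ha) _ hε
    have h2 : ε ∘ (fun _ : X => a) = (fun _ : X => ε a) := rfl
    rw [h2, hconst (ε a) (hε.2 ⟨a, rfl⟩), hconst a ha] at h1
    exact congrFun h1 b₀
  -- main argument
  intro α hα hfin
  have hRne : (Set.range α).Nonempty := ⟨α a₀, a₀, rfl⟩
  set F : Finset X := hfin.toFinset with hF
  have hFne : F.Nonempty := by
    obtain ⟨x, hx⟩ := hRne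
    exact ⟨x, hfin.mem_toFinset.mpr hx⟩
  -- the idempotent ε₀ with range = range α and ε₀ ∘ α = α
  set ε₀ : X → X := fun x =>
    if h : (F.filter (fun a => a ≤ x)).Nonempty then (F.filter (fun a => a ≤ x)).max' h
    else F.min' hFne with hε₀def
  have hε₀range : ∀ x, ε₀ x ∈ Set.range α := by
    intro x
    by_cases h : (F.filter (fun a => a ≤ x)).Nonempty
    · have := (F.filter (fun a => a ≤ x)).max'_mem h
      have := (Finset.mem_filter.mp this).1
      simpa [hε₀def, h] using hfin.mem_toFinset.mp this
    · have := F.min'_mem hFne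
      simpa [hε₀def, h] using hfin.mem_toFinset.mp this
  have hε₀fix : ∀ a ∈ Set.range α, ε₀ a = a := by
    intro a ha
    have haF : a ∈ F.filter (fun b => b ≤ a) :=
      Finset.mem_filter.mpr ⟨hfin.mem_toFinset.mpr ha, le_refl a⟩
    have h : (F.filter (fun b => b ≤ a)).Nonempty := ⟨a, haF⟩
    have h1 : (F.filter (fun b => b ≤ a)).max' h ≤ a :=
      Finset.max'_le _ h a (fun b hb => (Finset.mem_filter.mp hb).2)
    have h2 : a ≤ (F.filter (fun b => b ≤ a)).max' h := Finset.le_max' _ a haF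
    simp only [hε₀def, dif_pos h]
    exact le_antisymm h1 h2
  have hε₀mono : Monotone ε₀ := by
    intro x y hxy
    by_cases hx : (F.filter (fun a => a ≤ x)).Nonempty
    · have hy : (F.filter (fun a => a ≤ y)).Nonempty := by
        obtain ⟨b, hb⟩ := hx
        obtain ⟨hbF, hbx⟩ := Finset.mem_filter.mp hb
        exact ⟨b, Finset.mem_filter.mpr ⟨hbF, hbx.trans hxy⟩⟩
      simp only [hε₀def, dif_pos hx, dif_pos hy]
      apply Finset.le_max'
      obtain ⟨hbF, hbx⟩ := Finset.mem_filter.mp ((F.filter (fun a => a ≤ x)).max'_mem hx)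
      exact Finset.mem_filter.mpr ⟨hbF, hbx.trans hxy⟩
    · simp only [hε₀def, dif_neg hx]
      by_cases hy : (F.filter (fun a => a ≤ y)).Nonempty
      · simp only [dif_pos hy]
        exact F.min'_le _ (Finset.mem_filter.mp ((F.filter (fun a => a ≤ y)).max'_mem hy)).1
      · simp [dif_neg hy]
  have hε₀mem : ε₀ ∈ OPR X' := by
    refine ⟨hε₀mono, ?_⟩
    rintro x ⟨y, rfl⟩
    exact hα.2 (hε₀range y)
  have hε₀idem : ε₀ ∘ ε₀ = ε₀ := by
    funext x; exact hε₀fix _ (hε₀range x)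
  have hε₀α : ε₀ ∘ α = α := by
    funext x; exact hε₀fix _ ⟨x, rfl⟩
  -- range of φ ε₀
  have hφε₀idem : φ ε₀ ∘ φ ε₀ = φ ε₀ := by
    rw [← hφ.2 _ hε₀mem _ hε₀mem, hε₀idem]
  have hsub1 : Set.range (φ ε₀) ⊆ θ '' (Set.range α) := by
    rintro b ⟨y, rfl⟩
    have hbfix : φ ε₀ (φ ε₀ y) = φ ε₀ y := congrFun hφε₀idem y
    have hbY' : φ ε₀ y ∈ Y' := (hφ.1.mapsTo hε₀mem).2 ⟨y, rfl⟩
    obtain ⟨a, ha, hab⟩ := hθsurj hbY'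
    refine ⟨a, ?_, hab⟩
    have : θ (ε₀ a) = φ ε₀ (θ a) := hθeq a ha ε₀ hε₀mem
    rw [hab, hbfix, ← hab] at this
    have haeq : ε₀ a = a := hθinj (hε₀mem.2 ⟨a, rfl⟩) ha this
    rw [← haeq]
    exact hε₀range a
  have hsub2 : Set.range (φ α) ⊆ Set.range (φ ε₀) := by
    have h1 : φ α = φ ε₀ ∘ φ α := by
      rw [← hφ.2 _ hα _ hε₀mem, hε₀α]
    rintro b ⟨y, rfl⟩
    rw [h1]
    exact ⟨φ α y, rfl⟩
  have hsub : Set.range (φ α) ⊆ θ '' (Set.range α) := hsub2.trans hsub1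
  have himfin : (θ '' (Set.range α)).Finite := hfin.image θ
  refine ⟨himfin.subset hsub, ?_⟩
  calc (Set.range (φ α)).ncard ≤ (θ '' (Set.range α)).ncard :=
        Set.ncard_le_ncard hsub himfin
    _ = (Set.range α).ncard :=
        Set.ncard_image_of_injOn (hθinj.mono (fun a ha => hα.2 ha))

/-- an isomorphism preserves finiteness and cardinality of ranges. -/
theorem stmt_13 {X Y : Type*} [LinearOrder X] [LinearOrder Y] (X' : Set X) (Y' : Set Y)
    (hX' : X'.Nontrivial) (hY' : Y'.Nontrivial)
    (φ : (X → X) → (Y → Y)) (hφ : IsSgIso X' Y' φ) :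
    ∀ α ∈ OPR X', (Set.range α).Finite →
      (Set.range (φ α)).Finite ∧ (Set.range (φ α)).ncard = (Set.range α).ncard := by
  classical
  haveI : Nonempty (X → X) := ⟨id⟩
  intro α hα hfin
  obtain ⟨hfin', hle⟩ := sg_iso_range_le hX' hY' hφ α hα hfin
  -- the inverse isomorphism
  set ψ : (Y → Y) → (X → X) := Function.invFunOn φ (OPR X') with hψdef
  have hinv : Set.InvOn ψ φ (OPR X') (OPR Y') := hφ.1.invOn_invFunOn
  have hψbij : Set.BijOn ψ (OPR Y') (OPR X') := hφ.1.symm ⟨hinv.2, hinv.1⟩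
  have hψmul : ∀ g ∈ OPR Y', ∀ h ∈ OPR Y', ψ (h ∘ g) = ψ h ∘ ψ g := by
    intro g hg h hh
    have hψg : ψ g ∈ OPR X' := hψbij.mapsTo hg
    have hψh : ψ h ∈ OPR X' := hψbij.mapsTo hh
    have hmem : ψ h ∘ ψ g ∈ OPR X' := comp_mem_OPR hψg hψh
    have h1 : φ (ψ h ∘ ψ g) = h ∘ g := by
      rw [hφ.2 _ hψg _ hψh, hinv.2 hg, hinv.2 hh]
    calc ψ (h ∘ g) = ψ (φ (ψ h ∘ ψ g)) := by rw [h1]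
      _ = ψ h ∘ ψ g := hinv.1 hmem
  have hψiso : IsSgIso Y' X' ψ := ⟨hψbij, hψmul⟩
  obtain ⟨_, hle'⟩ := sg_iso_range_le hY' hX' hψiso (φ α) (hφ.1.mapsTo hα) hfin'
  rw [hinv.1 hα] at hle'
  exact ⟨hfin', le_antisymm hle hle'⟩
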